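/- arXiv:0909.1399 — 3 statements merged into one kernel-verified Lean document; each statement's English description precedes it below -/
import Mathlib

section
/- Let α(v) = √(∑ aᵢⱼ vⁱvʲ) with (aᵢⱼ) symmetric positive definite, β(v) = ∑ bᵢvⁱ linear with ∑ aⁱʲbᵢbⱼ < 1, F = α + β, and let (cᵢⱼ) be a real n×n matrix, bⁱ = ∑ⱼ aⁱʲbⱼ. Define Yⁱ(v) = ∑ⱼₖ cⱼₖ (vⁱ/F(v)) { vʲvᵏ + (bᵏvʲ − bʲvᵏ)α(v) }. Then ∑ᵢ ∂Yⁱ/∂vⁱ(v) = ((n+1)/2) ∑ᵢⱼ (cᵢⱼ + cⱼᵢ) vⁱvʲ/F(v) + (n+1) ∑ᵢⱼ (cᵢⱼ − cⱼᵢ) bʲ α(v)vⁱ/F(v) for all v ≠ 0. -/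
open Matrix ContinuousLinearMap
set_option maxHeartbeats 1000000

/-- Divergence computation for the term `Yⁱ` of the Randers geodesic spray
coefficients:
`∑ᵢ ∂Yⁱ/∂vⁱ(v) = ((n+1)/2) ∑ᵢⱼ (cᵢⱼ+cⱼᵢ) vⁱvʲ/F(v) + (n+1) ∑ᵢⱼ (cᵢⱼ−cⱼᵢ) bʲ α(v)vⁱ/F(v)`. -/
theorem stmt5 {n : ℕ} (A : Matrix (Fin n) (Fin n) ℝ) (hA : A.PosDef) (hAsymm : A.IsSymm)
    (b : Fin n → ℝ) (hb : b ⬝ᵥ A⁻¹ *ᵥ b < 1)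
    (c : Matrix (Fin n) (Fin n) ℝ)
    (α : (Fin n → ℝ) → ℝ) (hα : ∀ v, α v = Real.sqrt (v ⬝ᵥ A *ᵥ v))
    (F : (Fin n → ℝ) → ℝ) (hF : ∀ v, F v = α v + b ⬝ᵥ v)
    (bup : Fin n → ℝ) (hbup : ∀ i, bup i = ∑ j : Fin n, A⁻¹ i j * b j)
    (Y : Fin n → (Fin n → ℝ) → ℝ)
    (hY : ∀ i : Fin n, ∀ v : Fin n → ℝ,
      Y i v = ∑ j : Fin n, ∑ k : Fin n,
        c j k * (v i / F v) * (v j * v k + (bup k * v j - bup j * v k) * α v))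
    (v : Fin n → ℝ) (hv : v ≠ 0) :
    ∑ i : Fin n, fderiv ℝ (Y i) v (Pi.single i 1)
      = ((n + 1 : ℝ) / 2) * ∑ i : Fin n, ∑ j : Fin n, (c i j + c j i) * v i * v j / F v
        + (n + 1 : ℝ) * ∑ i : Fin n, ∑ j : Fin n,
            (c i j - c j i) * bup j * α v * v i / F v := by
  classical
  -- positivity
  have hq0 : 0 < v ⬝ᵥ A *ᵥ v := by simpa using hA.dotProduct_mulVec_pos hv
  have hα0 : 0 < α v := by rw [hα]; exact Real.sqrt_pos.2 hq0
  have hsym : ∀ x y : Fin n → ℝ, x ⬝ᵥ A *ᵥ y = y ⬝ᵥ A *ᵥ x := by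
    intro x y
    rw [Matrix.dotProduct_mulVec, ← Matrix.mulVec_transpose, hAsymm.eq, dotProduct_comm]
  have hF0 : 0 < F v := by
    set w := A⁻¹ *ᵥ b with hw
    have hAw : A *ᵥ w = b := by
      rw [hw, Matrix.mulVec_mulVec, Matrix.mul_nonsing_inv A (isUnit_iff_ne_zero.2 hA.det_pos.ne'),
        Matrix.one_mulVec]
    have h1 : w ⬝ᵥ A *ᵥ w = b ⬝ᵥ A⁻¹ *ᵥ b := by rw [hAw, dotProduct_comm]
    have h2 : w ⬝ᵥ A *ᵥ v = b ⬝ᵥ v := by rw [hsym w v, hAw, dotProduct_comm]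
    have h3 : v ⬝ᵥ A *ᵥ w = b ⬝ᵥ v := by rw [hAw, dotProduct_comm]
    have key : ∀ t : ℝ, 0 ≤ (v ⬝ᵥ A *ᵥ v) * (t * t) + (2 * (b ⬝ᵥ v)) * t + b ⬝ᵥ A⁻¹ *ᵥ b := by
      intro t
      have h := hA.posSemidef.dotProduct_mulVec_nonneg (w + t • v)
      simp only [star_trivial, Matrix.mulVec_add, Matrix.mulVec_smul, dotProduct_add,
        add_dotProduct, smul_dotProduct, dotProduct_smul, smul_eq_mul, h1, h2, h3] at h
      nlinarith [h]
    have hdisc := discrim_le_zero key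
    rw [discrim] at hdisc
    rw [hF]
    nlinarith [hdisc, hq0, hα0, hb, sq_nonneg (b ⬝ᵥ v), Real.sq_sqrt hq0.le, hα v]
  have hαsq : α v * α v = v ⬝ᵥ A *ᵥ v := by
    rw [hα]; exact Real.mul_self_sqrt hq0.le
  have hsA : ∀ j k, A j k = A k j := fun j k => hAsymm.apply k j
  -- abbreviations
  set Q : (Fin n → ℝ) → ℝ := fun w => ∑ j, ∑ k, c j k * (w j * w k) with hQdef
  set R : (Fin n → ℝ) → ℝ := fun w => ∑ j, ∑ k, c j k * (bup k * w j - bup j * w k) with hRdef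
  have hY2 : ∀ i, Y i = fun w => w i * ((Q w + α w * R w) * (F w)⁻¹) := by
    intro i; funext w; rw [hY]
    have e1 : ∑ j, ∑ k, c j k * (w i / F w) * (w j * w k + (bup k * w j - bup j * w k) * α w)
        = (w i * (F w)⁻¹) *
            ∑ j, ∑ k, (c j k * (w j * w k) + α w * (c j k * (bup k * w j - bup j * w k))) := by
      rw [Finset.mul_sum]
      refine Finset.sum_congr rfl fun j _ => ?_
      rw [Finset.mul_sum]
      refine Finset.sum_congr rfl fun k _ => ?_
      rw [div_eq_mul_inv]; ring
    rw [e1]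
    simp only [Finset.sum_add_distrib, ← Finset.mul_sum, hQdef, hRdef]
    ring
  -- derivatives
  have hproj : ∀ j : Fin n, HasFDerivAt (fun w : Fin n → ℝ => w j)
      (proj j : (Fin n → ℝ) →L[ℝ] ℝ) v := fun j => hasFDerivAt_apply j v
  set LQ : (Fin n → ℝ) →L[ℝ] ℝ :=
    ∑ j, ∑ k, c j k • (v j • (proj k : (Fin n → ℝ) →L[ℝ] ℝ) + v k • proj j) with hLQdef
  have hQd : HasFDerivAt Q LQ v := by
    refine HasFDerivAt.fun_sum fun j _ => HasFDerivAt.fun_sum fun k _ => ?_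
    exact ((hproj j).mul (hproj k)).const_mul (c j k)
  set LR : (Fin n → ℝ) →L[ℝ] ℝ :=
    ∑ j, ∑ k, c j k • (bup k • (proj j : (Fin n → ℝ) →L[ℝ] ℝ) - bup j • proj k) with hLRdef
  have hRd : HasFDerivAt R LR v := by
    refine HasFDerivAt.fun_sum fun j _ => HasFDerivAt.fun_sum fun k _ => ?_
    exact (((hproj j).const_mul (bup k)).sub ((hproj k).const_mul (bup j))).const_mul (c j k)
  set Lq : (Fin n → ℝ) →L[ℝ] ℝ :=
    ∑ j, (v j • (∑ k, A j k • (proj k : (Fin n → ℝ) →L[ℝ] ℝ)) + (∑ k, A j k * v k) • proj j)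
    with hLqdef
  have hqd : HasFDerivAt (fun w : Fin n → ℝ => w ⬝ᵥ A *ᵥ w) Lq v := by
    have e : (fun w : Fin n → ℝ => w ⬝ᵥ A *ᵥ w) = fun w => ∑ j, w j * ∑ k, A j k * w k := by
      funext w; simp [dotProduct, Matrix.mulVec]
    rw [e]
    exact HasFDerivAt.fun_sum fun j _ =>
      (hproj j).mul (HasFDerivAt.fun_sum fun k _ => (hproj k).const_mul (A j k))
  set Lα : (Fin n → ℝ) →L[ℝ] ℝ := (1 / (2 * Real.sqrt (v ⬝ᵥ A *ᵥ v))) • Lq with hLαdef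
  have hαd : HasFDerivAt α Lα v := by
    have h1 : α = (fun x => Real.sqrt x) ∘ (fun w : Fin n → ℝ => w ⬝ᵥ A *ᵥ w) := funext hα
    rw [h1]
    exact (Real.hasDerivAt_sqrt hq0.ne').comp_hasFDerivAt v hqd
  set Lb : (Fin n → ℝ) →L[ℝ] ℝ := ∑ j, b j • (proj j : (Fin n → ℝ) →L[ℝ] ℝ) with hLbdef
  have hFd : HasFDerivAt F (Lα + Lb) v := by
    have h1 : F = fun w => α w + ∑ j, b j * w j := by
      funext w; rw [hF]; simp [dotProduct]
    rw [h1]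
    exact hαd.add (HasFDerivAt.fun_sum fun j _ => (hproj j).const_mul (b j))
  have hinv : HasFDerivAt (fun w => (F w)⁻¹) ((-(F v ^ 2)⁻¹) • (Lα + Lb)) v := by
    exact (hasDerivAt_inv hF0.ne').comp_hasFDerivAt v hFd
  have hSd : HasFDerivAt (fun w => Q w + α w * R w) (LQ + (α v • LR + R v • Lα)) v :=
    hQd.add (hαd.mul hRd)
  have hYd : ∀ i, HasFDerivAt (Y i)
      (v i • ((Q v + α v * R v) • ((-(F v ^ 2)⁻¹) • (Lα + Lb))
          + (F v)⁻¹ • (LQ + (α v • LR + R v • Lα)))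
        + ((Q v + α v * R v) * (F v)⁻¹) • proj i) v := by
    intro i
    rw [hY2 i]
    exact (hproj i).mul (hSd.mul hinv)
    -- evaluations of the derivative maps at basis vectors
  have eQ : ∀ i, LQ (Pi.single i 1) = (∑ k, c i k * v k) + ∑ j, c j i * v j := by
    intro i
    rw [hLQdef]
    simp only [ContinuousLinearMap.sum_apply, ContinuousLinearMap.smul_apply,
      ContinuousLinearMap.add_apply, proj_apply, Pi.single_apply, smul_eq_mul,
      mul_add, mul_ite, mul_one, mul_zero, Finset.sum_add_distrib,
      Finset.sum_ite_eq', Finset.mem_univ, if_true]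
    rw [Finset.sum_comm]
    simp [add_comm]
  have eR : ∀ i, LR (Pi.single i 1) = (∑ k, c i k * bup k) - ∑ j, c j i * bup j := by
    intro i
    rw [hLRdef]
    simp only [ContinuousLinearMap.sum_apply, ContinuousLinearMap.smul_apply,
      ContinuousLinearMap.sub_apply, proj_apply, Pi.single_apply, smul_eq_mul,
      mul_sub, mul_ite, mul_one, mul_zero, Finset.sum_sub_distrib,
      Finset.sum_ite_eq', Finset.mem_univ, if_true]
    rw [Finset.sum_comm]
    simp [sub_eq_add_neg, add_comm]
  have eq' : ∀ i, Lq (Pi.single i 1) = 2 * ∑ k, A i k * v k := by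
    intro i
    rw [hLqdef]
    simp only [ContinuousLinearMap.sum_apply, ContinuousLinearMap.add_apply,
      ContinuousLinearMap.smul_apply, proj_apply, Pi.single_apply, smul_eq_mul,
      mul_ite, mul_one, mul_zero, Finset.sum_add_distrib,
      Finset.sum_ite_eq', Finset.mem_univ, if_true]
    have h2 : ∑ x, v x * A x i = ∑ k, A i k * v k :=
      Finset.sum_congr rfl fun x _ => by rw [hsA x i]; ring
    rw [h2]; ring
  have eα : ∀ i, Lα (Pi.single i 1) = (∑ k, A i k * v k) / α v := by
    intro i
    rw [hLαdef]
    simp only [ContinuousLinearMap.smul_apply, smul_eq_mul, eq' i, ← hα v]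
    field_simp
  have eb : ∀ i, Lb (Pi.single i 1) = b i := by
    intro i
    rw [hLbdef]
    simp [ContinuousLinearMap.sum_apply, ContinuousLinearMap.smul_apply,
      Pi.single_apply, Finset.sum_ite_eq', mul_ite]
  -- the directional derivatives
  have hfd : ∀ i, fderiv ℝ (Y i) v (Pi.single i 1)
      = (Q v + α v * R v) * (F v)⁻¹
        + (F v)⁻¹ * (v i * ((∑ k, c i k * v k) + ∑ j, c j i * v j))
        + (α v * (F v)⁻¹) * (v i * ((∑ k, c i k * bup k) - ∑ j, c j i * bup j))
        + (R v * (α v)⁻¹ * (F v)⁻¹) * (v i * (∑ k, A i k * v k))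
        - (Q v + α v * R v) * ((F v) ^ 2)⁻¹ * (α v)⁻¹ * (v i * (∑ k, A i k * v k))
        - (Q v + α v * R v) * ((F v) ^ 2)⁻¹ * (v i * b i) := by
    intro i
    rw [(hYd i).fderiv]
    simp only [ContinuousLinearMap.add_apply, ContinuousLinearMap.smul_apply, smul_eq_mul,
      proj_apply, Pi.single_eq_same, eQ i, eR i, eα i, eb i]
    field_simp
    ring
    -- summation identities
  have hQv : Q v = ∑ j, ∑ k, c j k * (v j * v k) := rfl
  have hRv : R v = ∑ j, ∑ k, c j k * (bup k * v j - bup j * v k) := rfl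
  have E1 : ∑ i, v i * (∑ k, A i k * v k) = α v * α v := by
    rw [hαsq]; simp [dotProduct, Matrix.mulVec]
  have E2 : ∑ i, v i * b i = b ⬝ᵥ v := by
    simp [dotProduct, mul_comm]
  have E3 : ∑ i, v i * ((∑ k, c i k * v k) + ∑ j, c j i * v j) = 2 * Q v := by
    simp only [mul_add, Finset.sum_add_distrib, Finset.mul_sum]
    have h1 : ∑ i, ∑ k, v i * (c i k * v k) = Q v := by
      rw [hQv]; exact Finset.sum_congr rfl fun i _ => Finset.sum_congr rfl fun k _ => by ring
    have h2 : ∑ i, ∑ j, v i * (c j i * v j) = Q v := by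
      rw [Finset.sum_comm, hQv]
      exact Finset.sum_congr rfl fun j _ => Finset.sum_congr rfl fun i _ => by ring
    rw [h1, h2]; ring
  have E4 : ∑ i, v i * ((∑ k, c i k * bup k) - ∑ j, c j i * bup j) = R v := by
    simp only [mul_sub, Finset.sum_sub_distrib, Finset.mul_sum]
    rw [hRv]
    simp only [mul_sub, Finset.sum_sub_distrib]
    congr 1
    · exact Finset.sum_congr rfl fun i _ => Finset.sum_congr rfl fun k _ => by ring
    · rw [Finset.sum_comm]
      exact Finset.sum_congr rfl fun j _ => Finset.sum_congr rfl fun i _ => by ring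
  have hRHS1 : ∑ i, ∑ j, (c i j + c j i) * v i * v j / F v = 2 * Q v / F v := by
    simp only [← Finset.sum_div]
    congr 1
    simp only [add_mul, Finset.sum_add_distrib]
    have h1 : ∑ i, ∑ j, c i j * v i * v j = Q v := by
      rw [hQv]; exact Finset.sum_congr rfl fun i _ => Finset.sum_congr rfl fun j _ => by ring
    have h2 : ∑ i, ∑ j, c j i * v i * v j = Q v := by
      rw [Finset.sum_comm, hQv]
      exact Finset.sum_congr rfl fun j _ => Finset.sum_congr rfl fun i _ => by ring
    rw [h1, h2]; ring
  have hRHS2 : ∑ i, ∑ j, (c i j - c j i) * bup j * α v * v i / F v = R v * α v / F v := by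
    simp only [← Finset.sum_div]
    congr 1
    simp only [sub_mul, Finset.sum_sub_distrib]
    rw [hRv, Finset.sum_mul]
    simp only [mul_sub, sub_mul, Finset.sum_sub_distrib, Finset.sum_mul]
    congr 1
    · exact Finset.sum_congr rfl fun i _ => Finset.sum_congr rfl fun j _ => by ring
    · rw [Finset.sum_comm]
      exact Finset.sum_congr rfl fun j _ => Finset.sum_congr rfl fun i _ => by ring
  rw [hRHS1, hRHS2]
  rw [Finset.sum_congr rfl fun i _ => hfd i]
  simp only [Finset.sum_add_distrib, Finset.sum_sub_distrib, ← Finset.mul_sum,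
    Finset.sum_const, Finset.card_univ, Fintype.card_fin, nsmul_eq_mul]
  rw [E1, E2, E3, E4]
  have hbv : b ⬝ᵥ v = F v - α v := by rw [hF v]; ring
  rw [hbv]
  field_simp
  ring
end

section
/- Let α(v) = √(∑ aᵢⱼvⁱvʲ) with (aᵢⱼ) symmetric positive definite (n ≥ 2), β(v) = ∑ bᵢvⁱ with ‖β‖² = ∑ aⁱʲbᵢbⱼ satisfying 0 < ‖β‖ < 1, and F = α + β. Suppose S(v,v)/F(v) is a linear function of v on ℝⁿ \ {0}, where S is a symmetric bilinear form. Then S = 0. -/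
open Matrix

/-- If `S(v,v)/F(v)` is linear in `v` for a Randers metric `F = α + β`
with `0 < ‖β‖ < 1` and `n ≥ 2`, then the symmetric bilinear form `S` vanishes. -/
theorem stmt6 {n : ℕ} (hn : 2 ≤ n)
    (A : Matrix (Fin n) (Fin n) ℝ) (hA : A.PosDef) (hAsymm : A.IsSymm)
    (b : Fin n → ℝ) (hb0 : 0 < b ⬝ᵥ A⁻¹ *ᵥ b) (hb1 : b ⬝ᵥ A⁻¹ *ᵥ b < 1)
    (α : (Fin n → ℝ) → ℝ) (hα : ∀ v, α v = Real.sqrt (v ⬝ᵥ A *ᵥ v))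
    (F : (Fin n → ℝ) → ℝ) (hF : ∀ v, F v = α v + b ⬝ᵥ v)
    (S : LinearMap.BilinForm ℝ (Fin n → ℝ)) (hS : S.IsSymm)
    (L : (Fin n → ℝ) →ₗ[ℝ] ℝ)
    (hlin : ∀ v : Fin n → ℝ, v ≠ 0 → S v v / F v = L v) :
    S = 0 := by
  classical
  set w : Fin n → ℝ := A⁻¹ *ᵥ b with hw
  have hAw : A *ᵥ w = b := by
    rw [hw, Matrix.mulVec_mulVec, Matrix.mul_nonsing_inv _ (Matrix.isUnit_iff_isUnit_det _ |>.1 hA.isUnit), Matrix.one_mulVec]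
  -- symmetry of the bilinear form
  have hBsymm : ∀ x y : Fin n → ℝ, x ⬝ᵥ A *ᵥ y = y ⬝ᵥ A *ᵥ x := by
    intro x y
    calc x ⬝ᵥ A *ᵥ y = (A *ᵥ x) ⬝ᵥ y := by
          rw [Matrix.dotProduct_mulVec, ← Matrix.mulVec_transpose, hAsymm.eq]
      _ = y ⬝ᵥ A *ᵥ x := dotProduct_comm _ _
  have hpos : ∀ x : Fin n → ℝ, x ≠ 0 → 0 < x ⬝ᵥ A *ᵥ x := by
    intro x hx
    simpa using hA.dotProduct_mulVec_pos hx
  have hnn : ∀ x : Fin n → ℝ, 0 ≤ x ⬝ᵥ A *ᵥ x := by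
    intro x
    by_cases hx : x = 0
    · simp [hx]
    · exact (hpos x hx).le
  have hbw : b ⬝ᵥ w = b ⬝ᵥ A⁻¹ *ᵥ b := rfl
  have hwAw : w ⬝ᵥ A *ᵥ w = b ⬝ᵥ w := by
    rw [hBsymm w w]  -- no-op, just compute
    rw [hAw, dotProduct_comm]
  -- Cauchy–Schwarz: (b ⬝ᵥ v)^2 ≤ (b ⬝ᵥ w) * (v ⬝ᵥ A *ᵥ v)
  have hCS : ∀ v : Fin n → ℝ, (b ⬝ᵥ v) ^ 2 ≤ (b ⬝ᵥ w) * (v ⬝ᵥ A *ᵥ v) := by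
    intro v
    have hwv : w ⬝ᵥ A *ᵥ v = b ⬝ᵥ v := by
      rw [Matrix.dotProduct_mulVec, ← Matrix.mulVec_transpose, hAsymm.eq, hAw]
    have h0 : 0 ≤ ((b ⬝ᵥ w) • v - (b ⬝ᵥ v) • w) ⬝ᵥ A *ᵥ ((b ⬝ᵥ w) • v - (b ⬝ᵥ v) • w) := hnn _
    have hexp : ((b ⬝ᵥ w) • v - (b ⬝ᵥ v) • w) ⬝ᵥ A *ᵥ ((b ⬝ᵥ w) • v - (b ⬝ᵥ v) • w)
        = (b ⬝ᵥ w)^2 * (v ⬝ᵥ A *ᵥ v) - 2 * (b ⬝ᵥ w) * (b ⬝ᵥ v) * (w ⬝ᵥ A *ᵥ v)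
          + (b ⬝ᵥ v)^2 * (w ⬝ᵥ A *ᵥ w) := by
      simp only [Matrix.mulVec_smul, sub_dotProduct, dotProduct_sub,
        smul_dotProduct, dotProduct_smul, Matrix.mulVec_sub, smul_eq_mul]
      rw [hBsymm v w]
      ring
    rw [hexp, hwv, hwAw] at h0
    nlinarith [hnn v, hb0]
  -- F positive on nonzero vectors
  have hFpos : ∀ v : Fin n → ℝ, v ≠ 0 → 0 < F v := by
    intro v hv
    have hq : 0 < v ⬝ᵥ A *ᵥ v := hpos v hv
    have hsq : (b ⬝ᵥ v) ^ 2 < v ⬝ᵥ A *ᵥ v := by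
      have := hCS v
      nlinarith [hb1, hq]
    have hαv : α v = Real.sqrt (v ⬝ᵥ A *ᵥ v) := hα v
    have habs : |b ⬝ᵥ v| < α v := by
      rw [hαv]
      have := Real.sqrt_lt_sqrt (sq_nonneg _) hsq
      rwa [Real.sqrt_sq_eq_abs] at this
    rw [hF v]
    cases abs_lt.1 habs with
    | intro h1 h2 => linarith
  -- key identity S v v = L v * F v on nonzero vectors
  have hkey : ∀ v : Fin n → ℝ, v ≠ 0 → S v v = L v * F v := by
    intro v hv
    have := hlin v hv
    field_simp [(hFpos v hv).ne'] at this
    linarith [this]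
  -- L vanishes
  have hL : ∀ v : Fin n → ℝ, L v = 0 := by
    intro v
    by_cases hv : v = 0
    · simp [hv]
    have hv' : (-v : Fin n → ℝ) ≠ 0 := neg_ne_zero.mpr hv
    have h1 := hkey v hv
    have h2 := hkey (-v) hv'
    have hαn : α (-v) = α v := by
      rw [hα, hα]
      congr 1
      simp only [Matrix.mulVec_neg, neg_dotProduct, dotProduct_neg, neg_neg]
    have hSn : S (-v) (-v) = S v v := by simp
    have hLn : L (-v) = -L v := by simp
    rw [hSn, hLn, hF, hαn, dotProduct_neg] at h2
    rw [hF] at h1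
    have hαpos : 0 < α v := by
      rw [hα]
      exact Real.sqrt_pos.mpr (hpos v hv)
    -- h1 : S v v = L v * (α v + b ⬝ᵥ v);  h2 : S v v = -L v * (α v - b ⬝ᵥ v)
    have : L v * α v = 0 := by nlinarith [h1, h2]
    rcases mul_eq_zero.1 this with h | h
    · exact h
    · exact absurd h hαpos.ne'
  have hSv : ∀ v : Fin n → ℝ, S v v = 0 := by
    intro v
    by_cases hv : v = 0
    · simp [hv]
    · rw [hkey v hv, hL v, zero_mul]
  -- polarization
  apply LinearMap.ext; intro x
  apply LinearMap.ext; intro y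
  have h1 := hSv (x + y)
  have h2 := hSv x
  have h3 := hSv y
  simp only [map_add, LinearMap.add_apply] at h1
  have h4 : S y x = S x y := by
    have := hS.eq y x
    simpa using this
  show S x y = (0 : LinearMap.BilinForm ℝ (Fin n → ℝ)) x y
  simp only [LinearMap.zero_apply]
  linarith
end

section
/- Let A be a real symmetric positive definite n×n matrix, b ∈ ℝⁿ with bᵀA⁻¹b < 1, and F(v) = √(vᵀAv) + bᵀv. Then the Lebesgue volume of the unit ball {v ∈ ℝⁿ : F(v) < 1} equals ωₙ / ((1 − bᵀA⁻¹b)^{(n+1)/2} √(det A)), where ωₙ is the volume of the Euclidean unit ball. -/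
open Matrix MeasureTheory

section helpers
private lemma dot_vecMulVec {n : ℕ} (b x w : Fin n → ℝ) :
    x ⬝ᵥ (Matrix.vecMulVec b b) *ᵥ w = (b ⬝ᵥ x) * (b ⬝ᵥ w) := by
  simp only [Matrix.mulVec, Matrix.vecMulVec_apply, dotProduct, Finset.mul_sum, Finset.sum_mul]
  rw [Finset.sum_comm]
  congr 1; ext i; congr 1; ext j; ring

private lemma vecMulVec_mulVec' {n : ℕ} (b u : Fin n → ℝ) :
    (Matrix.vecMulVec b b) *ᵥ u = (b ⬝ᵥ u) • b := by
  ext i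
  simp only [Matrix.mulVec, Matrix.vecMulVec_apply, dotProduct, Pi.smul_apply, smul_eq_mul,
    Finset.sum_mul, Finset.mul_sum]
  congr 1; ext j; ring

private lemma det_sub_vecMulVec {n : ℕ} (A : Matrix (Fin n) (Fin n) ℝ) (hA : A.PosDef)
    (b : Fin n → ℝ) :
    (A - Matrix.vecMulVec b b).det = A.det * (1 - b ⬝ᵥ A⁻¹ *ᵥ b) := by
  have h1 : A - Matrix.vecMulVec b b = A + Matrix.replicateCol Unit (-b) * Matrix.replicateRow Unit b := by
    rw [← Matrix.vecMulVec_eq]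
    ext i j
    simp [Matrix.vecMulVec_apply]
    ring
  rw [h1, Matrix.det_add_replicateCol_mul_replicateRow hA.det_pos.ne'.isUnit]
  congr 1
  rw [Matrix.det_unique]
  simp only [Matrix.add_apply, Matrix.one_apply_eq, Matrix.mul_apply, Matrix.replicateRow_apply,
    Matrix.replicateCol_apply, Finset.univ_unique, Finset.sum_singleton]
  rw [Matrix.dotProduct_mulVec]
  simp only [Matrix.vecMul, dotProduct, Matrix.mulVec, mul_neg, Finset.sum_neg_distrib,
    Finset.sum_mul, Finset.mul_sum]
  rw [sub_eq_add_neg, ← Finset.sum_neg_distrib]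
  congr 1
  refine Finset.sum_congr rfl fun x _ => ?_
  rw [← Finset.sum_neg_distrib]
  refine Finset.sum_congr rfl fun y _ => ?_
  simp
end helpers

open scoped MatrixOrder

/-- Volume of the Randers unit ball:
`vol {F < 1} = ωₙ / ((1 − bᵀA⁻¹b)^((n+1)/2) √(det A))`. -/
theorem stmt9 {n : ℕ} (A : Matrix (Fin n) (Fin n) ℝ) (hA : A.PosDef) (hAsymm : A.IsSymm)
    (b : Fin n → ℝ) (hb : b ⬝ᵥ A⁻¹ *ᵥ b < 1)
    (F : (Fin n → ℝ) → ℝ) (hF : ∀ v, F v = Real.sqrt (v ⬝ᵥ A *ᵥ v) + b ⬝ᵥ v) :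
    volume {v : Fin n → ℝ | F v < 1}
      = volume {v : Fin n → ℝ | ∑ i : Fin n, (v i) ^ 2 < 1}
          / ENNReal.ofReal
              ((1 - b ⬝ᵥ A⁻¹ *ᵥ b) ^ (((n : ℝ) + 1) / 2) * Real.sqrt A.det) := by
  have hdetA : 0 < A.det := hA.det_pos
  set s : ℝ := b ⬝ᵥ A⁻¹ *ᵥ b with hs_def
  set u : Fin n → ℝ := A⁻¹ *ᵥ b with hu_def
  have hAu : A *ᵥ u = b := by
    rw [hu_def, Matrix.mulVec_mulVec, Matrix.mul_nonsing_inv _ hdetA.ne'.isUnit,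
      Matrix.one_mulVec]
  have hbu : b ⬝ᵥ u = s := rfl
  have huAv : ∀ v, u ⬝ᵥ A *ᵥ v = b ⬝ᵥ v := by
    intro v
    rw [Matrix.dotProduct_mulVec, ← Matrix.mulVec_transpose, hAsymm.eq, hAu]
  have hvAu : ∀ v, v ⬝ᵥ A *ᵥ u = b ⬝ᵥ v := by
    intro v; rw [hAu, dotProduct_comm]
  have huAu : u ⬝ᵥ A *ᵥ u = s := by rw [huAv u, hbu]
  have hs0 : 0 ≤ s := by
    have h := hA.posSemidef.dotProduct_mulVec_nonneg u
    rw [star_trivial, huAu] at h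
    exact h
  have h1s : 0 < 1 - s := by linarith
  -- Cauchy–Schwarz
  have hCS : ∀ v, (b ⬝ᵥ v) ^ 2 ≤ s * (v ⬝ᵥ A *ᵥ v) := by
    intro v
    have key : ∀ t : ℝ, 0 ≤ s * (t * t) + (2 * (b ⬝ᵥ v)) * t + v ⬝ᵥ A *ᵥ v := by
      intro t
      have h := hA.posSemidef.dotProduct_mulVec_nonneg (v + t • u)
      rw [star_trivial] at h
      have expand : (v + t • u) ⬝ᵥ A *ᵥ (v + t • u)
          = s * (t * t) + (2 * (b ⬝ᵥ v)) * t + v ⬝ᵥ A *ᵥ v := by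
        simp only [Matrix.mulVec_add, Matrix.mulVec_smul, dotProduct_add, add_dotProduct,
          dotProduct_smul, smul_dotProduct, smul_eq_mul, hvAu v, huAv v, huAu]
        ring
      rw [expand] at h
      exact h
    have hd := discrim_le_zero key
    rw [discrim] at hd
    nlinarith [hd]
  set Q : Matrix (Fin n) (Fin n) ℝ := A - Matrix.vecMulVec b b with hQ_def
  have hQquad : ∀ v, v ⬝ᵥ Q *ᵥ v = v ⬝ᵥ A *ᵥ v - (b ⬝ᵥ v) ^ 2 := by
    intro v
    rw [hQ_def, Matrix.sub_mulVec, dotProduct_sub, dot_vecMulVec]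
    ring
  have hQherm : Q.IsHermitian := by
    refine Matrix.IsHermitian.sub (hA.1) ?_
    show (Matrix.vecMulVec b b)ᴴ = _
    rw [Matrix.conjTranspose_eq_transpose_of_trivial]
    ext i j
    simp [Matrix.vecMulVec_apply, mul_comm]
  have hQ : Q.PosDef := by
    refine Matrix.PosDef.of_dotProduct_mulVec_pos hQherm fun v hv => ?_
    rw [star_trivial, hQquad v]
    have hvA : 0 < v ⬝ᵥ A *ᵥ v := by
      have h := hA.dotProduct_mulVec_pos hv
      rwa [star_trivial] at h
    nlinarith [hCS v]
  have hQsymm : Qᵀ = Q := by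
    rw [← Matrix.conjTranspose_eq_transpose_of_trivial]; exact hQherm.eq
  have hdetQ : Q.det = A.det * (1 - s) := det_sub_vecMulVec A hA b
  have hdetQ_pos : 0 < Q.det := hQ.det_pos
  -- center of the ellipsoid
  set m : Fin n → ℝ := (1 - s)⁻¹ • u with hm_def
  have hQm : Q *ᵥ m = b := by
    rw [hm_def, Matrix.mulVec_smul, hQ_def, Matrix.sub_mulVec, hAu, vecMulVec_mulVec', hbu]
    ext i
    simp only [Pi.smul_apply, Pi.sub_apply, smul_eq_mul]
    field_simp
  have hbm : b ⬝ᵥ m = (1 - s)⁻¹ * s := by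
    rw [hm_def]
    simp [dotProduct_smul, hbu, smul_eq_mul]
  set c : ℝ := (1 - s)⁻¹ with hc_def
  have hc0 : 0 < c := inv_pos.mpr h1s
  have hc1 : 1 + b ⬝ᵥ m = c := by
    rw [hbm, hc_def]
    field_simp
    ring
  -- completing the square
  have hsq : ∀ v, (v + m) ⬝ᵥ Q *ᵥ (v + m) = v ⬝ᵥ Q *ᵥ v + 2 * (b ⬝ᵥ v) + b ⬝ᵥ m := by
    intro v
    have h1 : v ⬝ᵥ Q *ᵥ m = b ⬝ᵥ v := by rw [hQm, dotProduct_comm]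
    have h2 : m ⬝ᵥ Q *ᵥ v = b ⬝ᵥ v := by
      rw [Matrix.dotProduct_mulVec, ← Matrix.mulVec_transpose, hQsymm, hQm]
    have h3 : m ⬝ᵥ Q *ᵥ m = b ⬝ᵥ m := by
      rw [hQm, dotProduct_comm]
    simp only [Matrix.mulVec_add, dotProduct_add, add_dotProduct, h1, h2, h3]
    ring
  -- the square root of Q
  set S := CFC.sqrt Q with hS_def
  have hSS : S * S = Q := CFC.sqrt_mul_sqrt_self Q hQ.posSemidef.nonneg
  have hSsymm : Sᵀ = S := by
    rw [← Matrix.conjTranspose_eq_transpose_of_trivial]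
    exact (CFC.sqrt_nonneg Q).posSemidef.1
  have hQdot : ∀ w, w ⬝ᵥ Q *ᵥ w = (S *ᵥ w) ⬝ᵥ (S *ᵥ w) := by
    intro w
    rw [← hSS, ← Matrix.mulVec_mulVec, Matrix.dotProduct_mulVec, ← Matrix.mulVec_transpose,
      hSsymm]
  have hSdet_sq : S.det * S.det = Q.det := by rw [← Matrix.det_mul, hSS]
  have hSdet_pos : 0 < S.det := by
    have h0 : 0 ≤ S.det := (CFC.sqrt_nonneg Q).posSemidef.det_nonneg
    have hne : S.det ≠ 0 := by
      intro h
      rw [h, mul_zero] at hSdet_sq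
      exact hdetQ_pos.ne' hSdet_sq.symm
    exact h0.lt_of_ne (Ne.symm hne)
  -- scaling factor
  set r : ℝ := Real.sqrt (1 - s) with hr_def
  have hr0 : 0 < r := Real.sqrt_pos.mpr h1s
  have hr2 : r ^ 2 = 1 - s := Real.sq_sqrt h1s.le
  set M0 : Matrix (Fin n) (Fin n) ℝ := r • S with hM0_def
  set E : Set (Fin n → ℝ) := {w : Fin n → ℝ | ∑ i : Fin n, (w i) ^ 2 < 1} with hE_def
  -- pointwise characterization of the Randers ball
  have memE : ∀ v : Fin n → ℝ, (Matrix.toLin' M0 (v + m) ∈ E ↔ (v + m) ⬝ᵥ Q *ᵥ (v + m) < c) := by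
    intro v
    have happ : Matrix.toLin' M0 (v + m) = r • (S *ᵥ (v + m)) := by
      rw [Matrix.toLin'_apply, hM0_def, Matrix.smul_mulVec]
    rw [happ, hE_def]
    simp only [Set.mem_setOf_eq, Pi.smul_apply, smul_eq_mul, mul_pow]
    rw [← Finset.mul_sum, hr2, hQdot]
    have hdd : (S *ᵥ (v + m)) ⬝ᵥ (S *ᵥ (v + m)) = ∑ i, (S *ᵥ (v + m)) i ^ 2 := by
      simp [dotProduct, sq]
    rw [hdd, hc_def, ← one_div, mul_comm ((1 : ℝ) - s), ← lt_div_iff₀ h1s]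
  have hpoint : ∀ v : Fin n → ℝ, (F v < 1 ↔ Matrix.toLin' M0 (v + m) ∈ E) := by
    intro v
    have step1 : F v < 1 ↔ v ⬝ᵥ Q *ᵥ v + 2 * (b ⬝ᵥ v) < 1 := by
      rw [hF v, hQquad v]
      constructor
      · intro h
        have hX : Real.sqrt (v ⬝ᵥ A *ᵥ v) < 1 - b ⬝ᵥ v := by linarith
        have hpos : 0 < 1 - b ⬝ᵥ v := lt_of_le_of_lt (Real.sqrt_nonneg _) hX
        have h2 := (Real.sqrt_lt' hpos).mp hX
        nlinarith [h2]
      · intro h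
        by_cases hv : v = 0
        · subst hv; simp
        · have hC : 0 < v ⬝ᵥ A *ᵥ v := by
            have h' := hA.dotProduct_mulVec_pos hv; rwa [star_trivial] at h'
          have hXC : (b ⬝ᵥ v) ^ 2 < v ⬝ᵥ A *ᵥ v := lt_of_le_of_lt (hCS v) (by nlinarith)
          have hCX : v ⬝ᵥ A *ᵥ v < (1 - b ⬝ᵥ v) ^ 2 := by nlinarith
          have hpos : 0 < 1 - b ⬝ᵥ v := by nlinarith
          have h2 := (Real.sqrt_lt' hpos).mpr hCX
          linarith
    rw [step1, memE v, hsq v]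
    constructor
    · intro h; linarith [hc1]
    · intro h; linarith [hc1]
  have set_eq : {v : Fin n → ℝ | F v < 1}
      = (fun v : Fin n → ℝ => v + m) ⁻¹' (Matrix.toLin' M0 ⁻¹' E) := by
    ext v
    simpa using hpoint v
  -- determinant computations
  have hM0det : M0.det = r ^ n * S.det := by
    rw [hM0_def, Matrix.det_smul, Fintype.card_fin]
  have hSdetval : S.det = Real.sqrt A.det * r := by
    have h1 : Real.sqrt Q.det = S.det := by
      rw [← hSdet_sq, Real.sqrt_mul_self hSdet_pos.le]
    rw [← h1, hdetQ, Real.sqrt_mul hdetA.le, hr_def]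
  have hM0_pos : 0 < M0.det := by
    rw [hM0det]; exact mul_pos (pow_pos hr0 n) hSdet_pos
  have hT : (1 - s) ^ (((n : ℝ) + 1) / 2) * Real.sqrt A.det = M0.det := by
    have hpow : (1 - s) ^ (((n : ℝ) + 1) / 2) = r ^ (n + 1) := by
      rw [hr_def, Real.sqrt_eq_rpow, ← Real.rpow_natCast ((1 - s) ^ ((1 : ℝ) / 2)) (n + 1), ← Real.rpow_mul h1s.le]
      congr 1
      push_cast
      ring
    rw [hpow, hM0det, hSdetval]
    ring
  -- compute the measure
  have hdetLin : LinearMap.det (Matrix.toLin' M0) = M0.det := LinearMap.det_toLin' M0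
  rw [set_eq, measure_preimage_add_right,
    Measure.addHaar_preimage_linearMap volume (by rw [hdetLin]; exact hM0_pos.ne') E,
    hdetLin, hT, abs_of_pos (inv_pos.mpr hM0_pos), ENNReal.ofReal_inv_of_pos hM0_pos,
    ENNReal.div_eq_inv_mul]
end
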